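/- Let r : [0, ∞) → (0, ∞) be continuous and nonincreasing, with θ ∈ [1/2, 1), C > 0, and suppose that for every 0 < δ < T, r(T) − r(δ) ≤ −C²(1−θ)(T − δ) r(T)^{θ/(1−θ)}. Then for all T > 0, r(T) ≤ (r(0)/(C²(1−θ) T))^{(1−θ)/θ}; in particular r(T) → 0 as T → ∞. -/

import Mathlib

open Filter Real

/-- Polynomial decay of a positive nonincreasing continuous function
satisfying the averaged KL-type differential inequality. -/
theorem stmt_4 (r : ℝ → ℝ) (θ C : ℝ) (hθ : θ ∈ Set.Ico (1/2 : ℝ) 1) (hC : 0 < C)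
    (hpos : ∀ t ∈ Set.Ici (0:ℝ), 0 < r t)
    (hcont : ContinuousOn r (Set.Ici 0))
    (hmono : AntitoneOn r (Set.Ici 0))
    (h : ∀ δ T : ℝ, 0 < δ → δ < T →
      r T - r δ ≤ -(C ^ 2) * (1 - θ) * (T - δ) * r T ^ (θ / (1 - θ))) :
    (∀ T > (0:ℝ), r T ≤ (r 0 / (C ^ 2 * (1 - θ) * T)) ^ ((1 - θ) / θ)) ∧
      Filter.Tendsto r Filter.atTop (nhds 0) := by
  obtain ⟨hθh, hθ1⟩ := hθ
  have h1θ : 0 < 1 - θ := by linarith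
  have hθ0 : 0 < θ := by linarith
  set p : ℝ := θ / (1 - θ) with hp
  have hp0 : 0 < p := div_pos hθ0 h1θ
  have hr0 : 0 < r 0 := hpos 0 (Set.mem_Ici.mpr le_rfl)
  have key : ∀ T > (0:ℝ), C ^ 2 * (1 - θ) * T * r T ^ p ≤ r 0 := by
    intro T hT
    have hrT : 0 < r T := hpos T (Set.mem_Ici.mpr hT.le)
    have hKp : 0 < r T ^ p := Real.rpow_pos_of_pos hrT p
    set K : ℝ := C ^ 2 * (1 - θ) * r T ^ p with hK
    have hK0 : 0 < K := by positivity
    have hev : ∀ᶠ δ in nhdsWithin 0 (Set.Ioi 0), K * (T - δ) ≤ r 0 := by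
      filter_upwards [Ioo_mem_nhdsGT_of_mem (Set.left_mem_Ico.mpr hT)] with δ hδ
      have h1 := h δ T hδ.1 hδ.2
      have hrδ : r δ ≤ r 0 := hmono (Set.mem_Ici.mpr (le_refl 0)) hδ.1.le hδ.1.le
      nlinarith [hrT]
    have htend : Tendsto (fun δ : ℝ => K * (T - δ)) (nhdsWithin 0 (Set.Ioi 0)) (nhds (K * T)) := by
      have h2 : Tendsto (fun δ : ℝ => K * (T - δ)) (nhds 0) (nhds (K * (T - 0))) := by
        exact (tendsto_const_nhds.mul ((tendsto_const_nhds.sub tendsto_id)))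
      simpa using h2.mono_left nhdsWithin_le_nhds
    have h3 : K * T ≤ r 0 := le_of_tendsto htend hev
    nlinarith [h3]
  constructor
  · intro T hT
    have hrT : 0 < r T := hpos T (Set.mem_Ici.mpr hT.le)
    have hden : 0 < C ^ 2 * (1 - θ) * T := by positivity
    have h2 : r T ^ p ≤ r 0 / (C ^ 2 * (1 - θ) * T) := by
      rw [le_div_iff₀ hden]
      nlinarith [key T hT]
    have hq : (1 - θ) / θ = 1 / p := by
      rw [hp, one_div_div]
    rw [hq]
    calc r T = (r T ^ p) ^ (1 / p) := by
          rw [← Real.rpow_mul hrT.le, mul_one_div, div_self hp0.ne', Real.rpow_one]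
      _ ≤ (r 0 / (C ^ 2 * (1 - θ) * T)) ^ (1 / p) :=
          Real.rpow_le_rpow (Real.rpow_nonneg hrT.le p) h2 (by positivity)
  · set q : ℝ := (1 - θ) / θ with hqdef
    have hq0 : 0 < q := div_pos h1θ hθ0
    have hc : 0 < C ^ 2 * (1 - θ) := by positivity
    have hgt : Tendsto (fun T : ℝ => (r 0 / (C ^ 2 * (1 - θ))) ^ q / T ^ q) atTop (nhds 0) :=
      tendsto_const_nhds.div_atTop (tendsto_rpow_atTop hq0)
    have hgeq : ∀ᶠ T in atTop, (r 0 / (C ^ 2 * (1 - θ)) ) ^ q / T ^ q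
        = (r 0 / (C ^ 2 * (1 - θ) * T)) ^ q := by
      filter_upwards [eventually_ge_atTop (0:ℝ)] with T hT
      rw [← Real.div_rpow (by positivity) hT, div_div]
    have hg : Tendsto (fun T : ℝ => (r 0 / (C ^ 2 * (1 - θ) * T)) ^ q) atTop (nhds 0) :=
      hgt.congr' hgeq
    apply squeeze_zero' (f := r) (g := fun T => (r 0 / (C ^ 2 * (1 - θ) * T)) ^ q) ?_ ?_ hg
    · filter_upwards [eventually_ge_atTop (0:ℝ)] with T hT
      exact (hpos T (Set.mem_Ici.mpr hT)).le
    · filter_upwards [eventually_gt_atTop (0:ℝ)] with T hT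
      -- reuse the bound
      have hrT : 0 < r T := hpos T (Set.mem_Ici.mpr hT.le)
      have hden : 0 < C ^ 2 * (1 - θ) * T := by positivity
      have h2 : r T ^ p ≤ r 0 / (C ^ 2 * (1 - θ) * T) := by
        rw [le_div_iff₀ hden]
        nlinarith [key T hT]
      have hq : q = 1 / p := by rw [hqdef, hp, one_div_div]
      rw [hq]
      calc r T = (r T ^ p) ^ (1 / p) := by
            rw [← Real.rpow_mul hrT.le, mul_one_div, div_self hp0.ne', Real.rpow_one]
        _ ≤ (r 0 / (C ^ 2 * (1 - θ) * T)) ^ (1 / p) :=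
            Real.rpow_le_rpow (Real.rpow_nonneg hrT.le p) h2 (by positivity)
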